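/- Let (a_n)_{n≥2} be complex numbers with ∑_{n=2}^∞ |a_n|²/(n(n²−1)) < ∞. Then the antiholomorphic function ψ(z̄) = ∑_{n=2}^∞ a_n z̄^{n−2} converges for |z|<1 and there is a constant C (namely C² = 6·∑|a_n|²/(n(n²−1))) such that (1−|z|²)² |ψ(z̄)| ≤ C for all z in the unit disk. -/

import Mathlib

open scoped ComplexConjugate

private lemma choose3_eq (m : ℕ) :
    (((m + 3).choose 3 : ℝ)) * 6 = ((m : ℝ) + 1) * ((m : ℝ) + 2) * ((m : ℝ) + 3) := by
  have h : (m + 3).descFactorial 3 = 6 * (m + 3).choose 3 := by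
    simpa [Nat.factorial] using Nat.descFactorial_eq_factorial_mul_choose (m + 3) 3
  have h2 : (m + 3).descFactorial 3 = (m + 1) * ((m + 2) * (m + 3)) := by
    simp [Nat.descFactorial]
  have := h2.symm.trans h
  have : ((m + 1) * ((m + 2) * (m + 3)) : ℝ) = 6 * ((m + 3).choose 3 : ℝ) := by
    exact_mod_cast congrArg (fun n : ℕ => (n : ℝ)) this
  push_cast at this
  linarith

/-- If `∑_{n≥2} |a_n|²/(n(n²−1)) < ∞` then the antiholomorphic function
`ψ(z̄) = ∑_{n≥2} a_n z̄^{n−2}` converges on the unit disk and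
`(1−|z|²)² |ψ(z̄)| ≤ C` with `C² = 6 ∑_{n≥2} |a_n|²/(n(n²−1))`.
(The coefficient `a (m)` stands for `a_{m+2}`.) -/
theorem stmt1 (a : ℕ → ℂ)
    (ha : Summable fun m : ℕ =>
      ‖a m‖ ^ 2 / (((m : ℝ) + 2) * (((m : ℝ) + 2) ^ 2 - 1))) :
    ∀ z : ℂ, ‖z‖ < 1 →
      Summable (fun m : ℕ => a m * (conj z) ^ m) ∧
      (1 - ‖z‖ ^ 2) ^ 2 * ‖∑' m : ℕ, a m * (conj z) ^ m‖ ≤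
        Real.sqrt (6 * ∑' m : ℕ,
          ‖a m‖ ^ 2 / (((m : ℝ) + 2) * (((m : ℝ) + 2) ^ 2 - 1))) := by
  intro z hz
  set r : ℝ := ‖z‖ with hr
  have hr0 : 0 ≤ r := norm_nonneg z
  set x : ℝ := r ^ 2 with hxdef
  have hx0 : 0 ≤ x := sq_nonneg r
  have hx1 : x < 1 := by
    rw [hxdef]
    nlinarith
  -- weights
  set w : ℕ → ℝ := fun m => ((m : ℝ) + 2) * (((m : ℝ) + 2) ^ 2 - 1) with hw
  have hwpos : ∀ m, 0 < w m := by
    intro m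
    have : (0:ℝ) ≤ (m:ℝ) := Nat.cast_nonneg m
    have : w m = ((m:ℝ)+1) * ((m:ℝ)+2) * ((m:ℝ)+3) := by rw [hw]; ring
    rw [this]
    positivity
  -- sum of weights times geometric
  have hxnorm : ‖x‖ < 1 := by rw [Real.norm_eq_abs, abs_of_nonneg hx0]; exact hx1
  have hchoose : HasSum (fun m : ℕ => ((m + 3).choose 3 : ℝ) * x ^ m) (1 / (1 - x) ^ 4) :=
    hasSum_choose_mul_geometric_of_norm_lt_one 3 hxnorm
  have heqw : (fun m : ℕ => 6 * (((m + 3).choose 3 : ℝ) * x ^ m)) = fun m => w m * x ^ m := by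
    funext m
    have h := choose3_eq m
    have hwm : w m = ((m : ℝ) + 1) * ((m : ℝ) + 2) * ((m : ℝ) + 3) := by rw [hw]; ring
    rw [hwm, ← h]; ring
  have hcsum : HasSum (fun m : ℕ => w m * x ^ m) (6 / (1 - x) ^ 4) := by
    have h6 := hchoose.mul_left 6
    rw [heqw] at h6
    rw [show (6:ℝ) / (1 - x) ^ 4 = 6 * (1 / (1 - x) ^ 4) by ring]
    exact h6
  set S : ℝ := ∑' m : ℕ, ‖a m‖ ^ 2 / (((m : ℝ) + 2) * (((m : ℝ) + 2) ^ 2 - 1)) with hS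
  have hS0 : 0 ≤ S := tsum_nonneg fun m => div_nonneg (by positivity) (hwpos m).le
  -- b and c
  set b : ℕ → ℝ := fun m => ‖a m‖ / Real.sqrt (w m) with hb
  set c : ℕ → ℝ := fun m => Real.sqrt (w m) * r ^ m with hc
  have hsqrtpos : ∀ m, 0 < Real.sqrt (w m) := fun m => Real.sqrt_pos.2 (hwpos m)
  have hb2 : ∀ m, b m ^ 2 = ‖a m‖ ^ 2 / w m := by
    intro m
    rw [hb]
    rw [div_pow, Real.sq_sqrt (hwpos m).le]
  have hc2 : ∀ m, c m ^ 2 = w m * x ^ m := by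
    intro m
    rw [hc, mul_pow, Real.sq_sqrt (hwpos m).le, hxdef, ← pow_mul, ← pow_mul, mul_comm 2 m]
  have hbc : ∀ m, b m * c m = ‖a m‖ * r ^ m := by
    intro m
    have hne : Real.sqrt (w m) ≠ 0 := (hsqrtpos m).ne'
    show ‖a m‖ / Real.sqrt (w m) * (Real.sqrt (w m) * r ^ m) = ‖a m‖ * r ^ m
    rw [div_mul_eq_mul_div, mul_comm (Real.sqrt (w m)) (r ^ m), ← mul_assoc, mul_div_assoc,
      div_self hne, mul_one]
  have hbnn : ∀ m, 0 ≤ b m := fun m => by positivity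
  have hcnn : ∀ m, 0 ≤ c m := fun m => by positivity
  have hSb : Summable (fun m => b m ^ 2) := by
    simpa only [hb2] using ha
  have hSc : Summable (fun m => c m ^ 2) := by
    simp only [hc2]; exact hcsum.summable
  -- summability of the series
  have hnorm_eq : ∀ m, ‖a m * (conj z) ^ m‖ = b m * c m := by
    intro m
    rw [hbc, norm_mul, norm_pow, RCLike.norm_conj]
  have hsummable_norm : Summable (fun m => ‖a m * (conj z) ^ m‖) := by
    apply Summable.of_nonneg_of_le (fun m => norm_nonneg _)
      (fun m => ?_) (((hSb.add hSc).div_const 2))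
    rw [hnorm_eq m]
    show b m * c m ≤ (b m ^ 2 + c m ^ 2) / 2
    nlinarith [sq_nonneg (b m - c m)]
  have hsum : Summable (fun m : ℕ => a m * (conj z) ^ m) := hsummable_norm.of_norm
  refine ⟨hsum, ?_⟩
  -- Cauchy–Schwarz
  have hBS : ∑' m, b m ^ 2 = S := by
    rw [hS]; congr 1; ext m; rw [hb2]
  have hCS : ∑' m, c m ^ 2 = 6 / (1 - x) ^ 4 := by
    rw [(show (fun m => c m ^ 2) = fun m => w m * x ^ m by ext m; exact hc2 m)]
    exact hcsum.tsum_eq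
  have hT : Summable (fun m => b m * c m) := by
    simpa only [hnorm_eq] using hsummable_norm
  set T : ℝ := ∑' m, b m * c m with hTdef
  have hT0 : 0 ≤ T := tsum_nonneg fun m => mul_nonneg (hbnn m) (hcnn m)
  have hP0 : 0 ≤ S * (6 / (1 - x) ^ 4) := by
    apply mul_nonneg hS0
    positivity
  have hCSineq : T ≤ Real.sqrt (S * (6 / (1 - x) ^ 4)) := by
    apply Summable.tsum_le_of_sum_le hT
    intro s
    rw [Real.le_sqrt (Finset.sum_nonneg fun m _ => mul_nonneg (hbnn m) (hcnn m)) hP0]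
    calc (∑ m ∈ s, b m * c m) ^ 2
        ≤ (∑ m ∈ s, b m ^ 2) * (∑ m ∈ s, c m ^ 2) :=
          Finset.sum_mul_sq_le_sq_mul_sq s b c
      _ ≤ S * (6 / (1 - x) ^ 4) := by
          apply mul_le_mul
          · rw [← hBS]
            exact Summable.sum_le_tsum s (fun m _ => sq_nonneg _) hSb
          · rw [← hCS]
            exact Summable.sum_le_tsum s (fun m _ => sq_nonneg _) hSc
          · exact Finset.sum_nonneg fun m _ => sq_nonneg _
          · exact hS0
    
  have hT2 : T ^ 2 ≤ S * (6 / (1 - x) ^ 4) := by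
    have := Real.sqrt_le_sqrt (Real.le_sqrt hT0 hP0 |>.mp hCSineq) -- dummy
    exact (Real.le_sqrt hT0 hP0).mp hCSineq
  -- finish
  have hnormle : ‖∑' m : ℕ, a m * (conj z) ^ m‖ ≤ T := by
    rw [hTdef]
    calc ‖∑' m : ℕ, a m * (conj z) ^ m‖ ≤ ∑' m, ‖a m * (conj z) ^ m‖ :=
      norm_tsum_le_tsum_norm hsummable_norm
    _ = ∑' m, b m * c m := by congr 1; ext m; exact hnorm_eq m
  have h1x : 0 < 1 - x := by linarith
  rw [Real.le_sqrt (by positivity) (by positivity)]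
  have key : ((1 - x) ^ 2 * T) ^ 2 ≤ 6 * S := by
    have : ((1 - x) ^ 2 * T) ^ 2 = (1 - x) ^ 4 * T ^ 2 := by ring
    rw [this]
    have h4 : (0:ℝ) < (1 - x) ^ 4 := by positivity
    calc (1 - x) ^ 4 * T ^ 2 ≤ (1 - x) ^ 4 * (S * (6 / (1 - x) ^ 4)) := by
          exact mul_le_mul_of_nonneg_left hT2 h4.le
      _ = 6 * S := by field_simp
  calc ((1 - r ^ 2) ^ 2 * ‖∑' m : ℕ, a m * (conj z) ^ m‖) ^ 2
      ≤ ((1 - x) ^ 2 * T) ^ 2 := by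
        apply pow_le_pow_left₀ (by positivity)
        rw [hxdef]
        exact mul_le_mul_of_nonneg_left hnormle (by positivity)
    _ ≤ 6 * S := key
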